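/- Let G be a topological group and U a base of open neighborhoods of the identity. Then the sets {(g,h) : h ∈ UgU}, for U in the base, form a base of the Roelcke uniformity (the infimum of the left and right uniformities) on G. -/

import Mathlib

open Filter
open scoped Uniformity Topology

section Aux

variable {G : Type*} [Group G] [TopologicalSpace G] [IsTopologicalGroup G]

/-- The candidate Roelcke entourage associated to a set `U`. -/
def roelckeEnt (U : Set G) : Set (G × G) :=
  {p : G × G | ∃ u ∈ U, ∃ v ∈ U, p.2 = u * p.1 * v}

theorem roelckeEnt_mono {U V : Set G} (h : U ⊆ V) : roelckeEnt U ⊆ roelckeEnt V := by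
  rintro ⟨g, k⟩ ⟨u, hu, v, hv, (hk : k = u * g * v)⟩
  exact ⟨u, h hu, v, h hv, hk⟩

/-- The candidate Roelcke uniformity filter. -/
def roelckeFilter (G : Type*) [Group G] [TopologicalSpace G] : Filter (G × G) :=
  ⨅ (U : Set G) (_ : U ∈ 𝓝 (1 : G)), 𝓟 (roelckeEnt U)

theorem roelckeFilter_hasBasis :
    (roelckeFilter G).HasBasis (fun U : Set G => U ∈ 𝓝 (1 : G)) roelckeEnt := by
  refine hasBasis_biInf_principal' (fun U hU V hV => ?_) ⟨Set.univ, univ_mem⟩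
  exact ⟨U ∩ V, inter_mem hU hV, roelckeEnt_mono Set.inter_subset_left,
    roelckeEnt_mono Set.inter_subset_right⟩

/-- The candidate Roelcke uniformity as a `UniformSpace.Core`. -/
def roelckeCore (G : Type*) [Group G] [TopologicalSpace G] [IsTopologicalGroup G] :
    UniformSpace.Core G where
  uniformity := roelckeFilter G
  refl := by
    refine le_iInf₂ fun U hU => ?_
    refine principal_mono.2 ?_
    rintro ⟨g, k⟩ (rfl : g = k)
    exact ⟨1, mem_of_mem_nhds hU, 1, mem_of_mem_nhds hU, by simp⟩
  symm := by
    rw [roelckeFilter_hasBasis.tendsto_iff roelckeFilter_hasBasis]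
    intro U hU
    refine ⟨U⁻¹, inv_mem_nhds_one G hU, ?_⟩
    rintro ⟨g, k⟩ ⟨u, hu, v, hv, (hk : k = u * g * v)⟩
    subst hk
    exact ⟨u⁻¹, by simpa using Set.inv_mem_inv.2 hu, v⁻¹, by simpa using Set.inv_mem_inv.2 hv,
      show g = u⁻¹ * (u * g * v) * v⁻¹ by group⟩
  comp := by
    refine le_iInf₂ fun U hU => ?_
    obtain ⟨V, hV, hVU⟩ := exists_nhds_one_split hU
    refine le_principal_iff.2 (mem_of_superset
      (mem_lift' (roelckeFilter_hasBasis.mem_of_mem hV)) ?_)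
    rintro ⟨g, k⟩ ⟨m, ⟨u, hu, v, hv, (hm : m = u * g * v)⟩, u', hu', v', hv',
      (hk : k = u' * m * v')⟩
    subst hm; subst hk
    refine ⟨u' * u, hVU u' hu' u hu, v * v', hVU v hv v' hv', by group⟩

/-- The candidate Roelcke uniform structure. -/
def roelckeUniformSpace (G : Type*) [Group G] [TopologicalSpace G] [IsTopologicalGroup G] :
    UniformSpace G :=
  UniformSpace.ofCore (roelckeCore G)

theorem uniformity_roelcke : 𝓤[roelckeUniformSpace G] = roelckeFilter G := rfl

theorem rightUniformity_le :
    𝓤[IsTopologicalGroup.rightUniformSpace G] ≤ roelckeFilter G := by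
  rw [roelckeFilter_hasBasis.ge_iff]
  intro U hU
  show roelckeEnt U ∈ comap (fun p : G × G => p.2 * p.1⁻¹) (𝓝 (1 : G))
  refine mem_comap.2 ⟨U, hU, ?_⟩
  rintro ⟨g, k⟩ (h : k * g⁻¹ ∈ U)
  exact ⟨k * g⁻¹, h, 1, mem_of_mem_nhds hU, by simp⟩

theorem leftUniformity_le :
    𝓤[UniformSpace.comap (fun g : G => g⁻¹) (IsTopologicalGroup.rightUniformSpace G)]
      ≤ roelckeFilter G := by
  rw [roelckeFilter_hasBasis.ge_iff]
  intro U hU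
  rw [uniformity_comap]
  show roelckeEnt U ∈
    comap (Prod.map (fun g : G => g⁻¹) fun g : G => g⁻¹)
      (comap (fun p : G × G => p.2 * p.1⁻¹) (𝓝 (1 : G)))
  rw [comap_comap]
  refine mem_comap.2 ⟨U⁻¹, inv_mem_nhds_one G hU, ?_⟩
  rintro ⟨g, k⟩ (h : k⁻¹ * g⁻¹⁻¹ ∈ U⁻¹)
  refine ⟨1, mem_of_mem_nhds hU, (k⁻¹ * g⁻¹⁻¹)⁻¹, by simpa using Set.inv_mem_inv.2 h,
    by simp [div_eq_mul_inv]⟩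

end Aux

/-- on a topological group `G`, the sets `{(g,h) : h ∈ U g U}` for `U` a
neighborhood of the identity form a basis of the Roelcke uniformity, i.e. of the infimum
(in the classical sense: the finest uniformity coarser than both, which in Mathlib's order
on `UniformSpace` is the supremum `⊔`) of the right uniformity
`TopologicalGroup.toUniformSpace G` and the left uniformity (its pullback by inversion). -/
theorem stmt_5 {G : Type*} [Group G] [TopologicalSpace G] [IsTopologicalGroup G] :
    (𝓤[(IsTopologicalGroup.rightUniformSpace G) ⊔
        (UniformSpace.comap (fun g : G => g⁻¹) (IsTopologicalGroup.rightUniformSpace G))]).HasBasis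
      (fun U : Set G => U ∈ 𝓝 (1 : G))
      (fun U => {p : G × G | ∃ u ∈ U, ∃ v ∈ U, p.2 = u * p.1 * v}) := by
  set uR := IsTopologicalGroup.rightUniformSpace G
  set uL := UniformSpace.comap (fun g : G => g⁻¹) (IsTopologicalGroup.rightUniformSpace G)
  have key : 𝓤[uR ⊔ uL] = roelckeFilter G := by
    have h1 : uR ⊔ uL ≤ roelckeUniformSpace G :=
      sup_le rightUniformity_le leftUniformity_le
    refine le_antisymm h1 ?_
    -- `roelckeFilter G ≤ 𝓤[uR ⊔ uL]` : every entourage of the sup contains some `roelckeEnt U`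
    intro t ht
    obtain ⟨t', ht', ht't⟩ := @comp_mem_uniformity_sets G (uR ⊔ uL) t ht
    have htR : t' ∈ 𝓤[uR] := le_sup_left (α := UniformSpace G) ht'
    have htL : t' ∈ 𝓤[uL] := le_sup_right (α := UniformSpace G) ht'
    obtain ⟨V, hV, hVt⟩ : ∃ V ∈ 𝓝 (1 : G), {p : G × G | p.2 / p.1 ∈ V} ⊆ t' := by
      rcases mem_comap.1 htR with ⟨V, hV, hVt⟩
      exact ⟨V, hV, fun p hp => hVt (by simpa [div_eq_mul_inv] using hp)⟩
    obtain ⟨W, hW, hWt⟩ : ∃ W ∈ 𝓝 (1 : G), {p : G × G | p.2⁻¹ / p.1⁻¹ ∈ W} ⊆ t' := by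
      have : 𝓤[uL] = comap (fun p : G × G => p.2⁻¹ / p.1⁻¹) (𝓝 (1 : G)) := by
        show 𝓤[uL] = _
        rw [show uL = UniformSpace.comap (fun g : G => g⁻¹)
          (IsTopologicalGroup.rightUniformSpace G) from rfl, uniformity_comap]
        show comap (Prod.map _ _) (comap (fun p : G × G => p.2 * p.1⁻¹) (𝓝 (1 : G))) = _
        rw [comap_comap]; simp [Function.comp_def, div_eq_mul_inv]
      rw [this] at htL
      rcases mem_comap.1 htL with ⟨W, hW, hWt⟩
      exact ⟨W, hW, hWt⟩
    refine (roelckeFilter_hasBasis.mem_iff).2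
      ⟨V ∩ W⁻¹, inter_mem hV (inv_mem_nhds_one G hW), ?_⟩
    rintro ⟨g, k⟩ ⟨u, hu, v, hv, (hk : k = u * g * v)⟩
    subst hk
    refine ht't ⟨g * v, ?_, ?_⟩
    · exact hWt (show (g * v)⁻¹ / g⁻¹ ∈ W by
        simpa [div_eq_mul_inv, mul_assoc] using (show v⁻¹ ∈ W by simpa using Set.inv_mem_inv.2 hv.2))
    · exact hVt (show u * g * v / (g * v) ∈ V by
        simpa [div_eq_mul_inv, mul_assoc] using hu.1)
  rw [key]
  exact roelckeFilter_hasBasis
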